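/- Every idempotent e in P_n is S_n-conjugate to a standard idempotent, i.e., there is a permutation matrix σ with σ e σ^{-1} = c^{(β_1)} ⊕ ... ⊕ c^{(β_r)} ⊕ 0_m where β_1 ≥ ... ≥ β_r ≥ 1 and m + Σβ_i = n. -/

import Mathlib

/-- Composition of partial transformations on `{1,…,n}`: `pcomp f g = f ∘ g`. -/
def pcomp {n : ℕ} (f g : Fin n → Option (Fin n)) : Fin n → Option (Fin n) :=
  fun x => (g x).bind f

/-- Conjugation action of `S_n` on partial transformations: `(g • e)(x) = g(e(g⁻¹ x))`. -/
def pconj {n : ℕ} (g : Equiv.Perm (Fin n)) (e : Fin n → Option (Fin n)) :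
    Fin n → Option (Fin n) :=
  fun x => Option.map g (e (g⁻¹ x))

/-- Partial sums of block sizes: `S β i = β 0 + ⋯ + β (i-1)`. -/
def blockSum (β : ℕ → ℕ) (i : ℕ) : ℕ := ∑ j ∈ Finset.range i, β j

/-- Dropping the first `i` blocks' worth of elements from a join. -/
lemma drop_join_aux {α : Type*} :
    ∀ (J : List (List α)) (i : ℕ) (hi : i < J.length),
      J.flatten.drop (((J.map List.length).take i).sum) =
        J[i]'hi ++ (J.drop (i + 1)).flatten
  | a :: t, 0, _ => by simp
  | a :: t, i + 1, h => by
    have ih := drop_join_aux t i (by simpa using h)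
    simp only [List.map_cons, List.take_succ_cons, List.sum_cons, List.flatten_cons]
    rw [List.drop_append]
    rw [List.drop_eq_nil_iff.mpr (by omega), List.nil_append]
    simpa using ih

/-- Sum of a `take` as a `blockSum` of `getD`. -/
lemma sum_take_getD (l : List ℕ) : ∀ i, i ≤ l.length →
    (l.take i).sum = blockSum (fun j => l.getD j 0) i := by
  intro i
  induction i with
  | zero => intro _; simp [blockSum]
  | succ k ih =>
    intro h
    have hk : k < l.length := h
    have hstep : blockSum (fun j => l.getD j 0) (k + 1) =
        blockSum (fun j => l.getD j 0) k + l.getD k 0 := by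
      simp [blockSum, Finset.sum_range_succ]
    rw [List.sum_take_succ _ _ hk, ih (le_of_lt hk), hstep, List.getD_eq_getElem l 0 hk]

/-- Transport a list indexing along equalities of the list and the index. -/
lemma getElem_ext {α : Type*} {l₁ l₂ : List α} {i j : ℕ} (h : l₁ = l₂) (hij : i = j)
    {hi : i < l₁.length} {hj : j < l₂.length} : l₁[i]'hi = l₂[j]'hj := by
  subst h; subst hij; rfl

/-- Every idempotent `e` in `P_n` is conjugate, by a permutation `σ ∈ S_n`, to a
standard idempotent `c^{(β₁)} ⊕ ⋯ ⊕ c^{(β_r)} ⊕ 0_m` with `β₁ ≥ ⋯ ≥ β_r ≥ 1` and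
`m + ∑ βᵢ = n`: the `i`-th block occupies positions `[S i, S (i+1))`, and the
constant idempotent `c^{(βᵢ)}` maps every position in the block to its first
position `S i`; positions beyond `S r` are undefined. -/
theorem idempotent_conjugate_to_standard (n : ℕ) (e : Fin n → Option (Fin n))
    (he : pcomp e e = e) :
    ∃ (σ : Equiv.Perm (Fin n)) (r : ℕ) (β : ℕ → ℕ) (m : ℕ),
      (∀ i < r, 1 ≤ β i) ∧
      (∀ i j, i ≤ j → j < r → β j ≤ β i) ∧
      m + blockSum β r = n ∧
      (∀ i < r, ∀ x : Fin n, blockSum β i ≤ (x : ℕ) → (x : ℕ) < blockSum β (i + 1) →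
        ∃ y : Fin n, (y : ℕ) = blockSum β i ∧ pconj σ e x = some y) ∧
      (∀ x : Fin n, blockSum β r ≤ (x : ℕ) → pconj σ e x = none) := by
  classical
  -- idempotence: images are fixed points
  have hfix : ∀ x y : Fin n, e x = some y → e y = some y := by
    intro x y h
    have := congrFun he x
    rw [pcomp, h] at this
    simpa [h] using this
  -- fixed points, blocks, undefined set
  set F : Finset (Fin n) := Finset.univ.filter (fun y => e y = some y) with hF
  set B : Fin n → Finset (Fin n) := fun f => Finset.univ.filter (fun x => e x = some f) with hB
  set U : Finset (Fin n) := Finset.univ.filter (fun x => e x = none) with hU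
  have hmemB : ∀ f, f ∈ F → f ∈ B f := by
    intro f hf
    simp only [hF, Finset.mem_filter] at hf
    simp [hB, hf.2]
  -- sort fixed points by decreasing block size
  let r0 : Fin n → Fin n → Prop := fun a b => (B b).card ≤ (B a).card
  haveI : IsTotal (Fin n) r0 := ⟨fun a b => le_total _ _⟩
  haveI : IsTrans (Fin n) r0 := ⟨fun _ _ _ h1 h2 => le_trans h2 h1⟩
  set fl : List (Fin n) := List.insertionSort r0 F.toList with hfl
  have hflperm : List.Perm fl F.toList := List.perm_insertionSort r0 F.toList
  have hflF : ∀ f ∈ fl, f ∈ F := by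
    intro f hf
    exact Finset.mem_toList.mp (hflperm.mem_iff.mp hf)
  have hflsorted : fl.Pairwise r0 := List.pairwise_insertionSort r0 F.toList
  set r : ℕ := fl.length with hr
  set J : List (List (Fin n)) := fl.map (fun f => f :: ((B f).erase f).toList) with hJ
  have hJlen : J.length = r := by simp [hJ, hr]
  set UL : List (Fin n) := U.toList with hUL
  set L : List (Fin n) := J.flatten ++ UL with hL
  -- length of each block
  have hblocklen : ∀ f ∈ F, (f :: ((B f).erase f).toList).length = (B f).card := by
    intro f hf
    have hfm := hmemB f hf
    simp only [List.length_cons, Finset.length_toList]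
    rw [Finset.card_erase_of_mem hfm]
    have : 1 ≤ (B f).card := Finset.card_pos.mpr ⟨f, hfm⟩
    omega
  have hJget : ∀ (i : ℕ) (hi : i < J.length),
      J[i] = fl[i]'(by rwa [hJlen] at hi) ::
        ((B (fl[i]'(by rwa [hJlen] at hi))).erase (fl[i]'(by rwa [hJlen] at hi))).toList := by
    intro i hi
    simp [hJ]
  -- block sizes
  set β : ℕ → ℕ := fun j => (J.map List.length).getD j 0 with hβ
  have hβget : ∀ i (hi : i < r), β i = (B (fl[i]'hi)).card := by
    intro i hi
    have hi' : i < J.length := by rwa [hJlen]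
    have : (J.map List.length).getD i 0 = (J[i]'hi').length := by
      rw [List.getD_eq_getElem _ _ (by simpa using hi')]
      simp
    show (J.map List.length).getD i 0 = _
    rw [this, hJget i hi', hblocklen _ (hflF _ (List.getElem_mem hi))]
  -- blockSum as take-sum
  have hbs : ∀ i, i ≤ r → blockSum β i = (((J.map List.length).take i)).sum := by
    intro i hi
    rw [sum_take_getD _ i (by simpa [hJlen] using hi)]
  -- members of a block map to its head
  have hblockmem : ∀ f ∈ F, ∀ x ∈ (f :: ((B f).erase f).toList), e x = some f := by
    intro f hf x hx
    rcases List.mem_cons.mp hx with rfl | hx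
    · simp only [hF, Finset.mem_filter] at hf; exact hf.2
    · have := Finset.mem_of_mem_erase (Finset.mem_toList.mp hx)
      simp only [hB, Finset.mem_filter] at this
      exact this.2
  -- L has length n
  have hdisjBU : ∀ f ∈ F, Disjoint (B f) U := by
    intro f _
    rw [Finset.disjoint_left]
    intro x hx hxu
    simp only [hB, Finset.mem_filter] at hx
    simp only [hU, Finset.mem_filter] at hxu
    rw [hx.2] at hxu; exact absurd hxu.2 (by simp)
  have hdisjBB : ∀ f ∈ F, ∀ g ∈ F, f ≠ g → Disjoint (B f) (B g) := by
    intro f _ g _ hfg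
    rw [Finset.disjoint_left]
    intro x hx hxg
    simp only [hB, Finset.mem_filter] at hx hxg
    rw [hx.2] at hxg
    exact hfg (Option.some.injEq .. ▸ hxg.2)
  have hcover : F.biUnion B ∪ U = Finset.univ := by
    ext x
    simp only [Finset.mem_union, Finset.mem_biUnion, Finset.mem_univ, iff_true]
    cases hx : e x with
    | none => right; simp [hU, hx]
    | some y =>
      left
      exact ⟨y, by simp [hF, hfix x y hx], by simp [hB, hx]⟩
  have hcard : (∑ f ∈ F, (B f).card) + U.card = n := by
    rw [← Finset.card_biUnion hdisjBB, ← Finset.card_union_of_disjoint, hcover]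
    · simp
    · rw [Finset.disjoint_left]
      intro x hx hxu
      rw [Finset.mem_biUnion] at hx
      obtain ⟨f, hf, hxf⟩ := hx
      exact Finset.disjoint_left.mp (hdisjBU f hf) hxf hxu
  have hjoinlen : J.flatten.length = ∑ f ∈ F, (B f).card := by
    rw [List.length_flatten]
    have h1 : J.map List.length = fl.map (fun f => (B f).card) := by
      rw [hJ, List.map_map]
      apply List.map_congr_left
      intro f hf
      exact hblocklen f (hflF f hf)
    rw [h1]
    have h2 : List.Perm (fl.map (fun f => (B f).card)) (F.toList.map (fun f => (B f).card)) :=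
      hflperm.map _
    rw [h2.sum_eq, Finset.sum_map_toList]
  have hLlen : L.length = n := by
    rw [hL, List.length_append, hjoinlen, hUL, Finset.length_toList, hcard]
  have hLlen2 : J.flatten.length + UL.length = n := by
    rw [← List.length_append]; exact hLlen
  -- the map τ
  set τ : Fin n → Fin n := fun p => L[(p : ℕ)]'(by rw [hLlen]; exact p.2) with hτ
  have hsurj : Function.Surjective τ := by
    intro x
    have hxL : x ∈ L := by
      rw [hL, List.mem_append]
      cases hx : e x with
      | none =>
        right; rw [hUL, Finset.mem_toList]; simp [hU, hx]
      | some y =>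
        left
        rw [List.mem_flatten]
        have hyF : y ∈ F := by simp [hF, hfix x y hx]
        have hyfl : y ∈ fl := hflperm.mem_iff.mpr (Finset.mem_toList.mpr hyF)
        refine ⟨y :: ((B y).erase y).toList, ?_, ?_⟩
        · rw [hJ]; exact List.mem_map_of_mem hyfl
        · rcases eq_or_ne x y with rfl | hxy
          · exact List.mem_cons_self
          · refine List.mem_cons_of_mem _ ?_
            rw [Finset.mem_toList, Finset.mem_erase]
            exact ⟨hxy, by simp [hB, hx]⟩
    obtain ⟨i, hi, hget⟩ := List.mem_iff_getElem.mp hxL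
    exact ⟨⟨i, by rwa [hLlen] at hi⟩, hget⟩
  have hbij : Function.Bijective τ := Finite.surjective_iff_bijective.mp hsurj
  let φ : Fin n ≃ Fin n := Equiv.ofBijective τ hbij
  refine ⟨φ.symm, r, β, UL.length, ?_, ?_, ?_, ?_, ?_⟩
  · -- positivity
    intro i hi
    rw [hβget i hi]
    exact Finset.card_pos.mpr ⟨_, hmemB _ (hflF _ (List.getElem_mem hi))⟩
  · -- monotonicity
    intro i j hij hjr
    rcases eq_or_lt_of_le hij with rfl | hlt
    · exact le_rfl
    · rw [hβget i (lt_trans hlt hjr), hβget j hjr]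
      exact hflsorted.rel_get_of_lt (a := ⟨i, lt_trans hlt hjr⟩) (b := ⟨j, hjr⟩) hlt
  · -- total size
    rw [hbs r le_rfl, List.take_of_length_le (by simp [hJlen]), ← List.length_flatten]
    omega
  · -- blocks
    intro i hi x hx1 hx2
    have hi' : i < J.length := by rwa [hJlen]
    have hSi : blockSum β i = ((J.map List.length).take i).sum := hbs i (le_of_lt hi)
    have hSi1 : blockSum β (i + 1) = blockSum β i + β i := by
      rw [blockSum, blockSum, Finset.sum_range_succ]
    have hβi : β i = (J[i]'hi').length := by
      rw [hβget i hi, hJget i hi', hblocklen _ (hflF _ (List.getElem_mem hi))]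
    -- the position in the flatten
    have hxflat : (x : ℕ) < J.flatten.length := by
      have : blockSum β (i+1) ≤ blockSum β r := by
        apply Finset.sum_le_sum_of_subset
        exact Finset.range_subset_range.mpr hi
      have h2 : blockSum β r = J.flatten.length := by
        rw [hbs r le_rfl, List.take_of_length_le (by simp [hJlen]), List.length_flatten]
      omega
    set k : ℕ := (x : ℕ) - blockSum β i with hk
    have hxeq : (x : ℕ) = blockSum β i + k := by omega
    have hkβ : k < (J[i]'hi').length := by rw [← hβi]; omega
    have hdrop := drop_join_aux J i hi'
    have hgetflat : ∀ (k' : ℕ) (hk' : k' < (J[i]'hi').length)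
        (hlt : blockSum β i + k' < J.flatten.length),
        J.flatten[blockSum β i + k']'hlt = (J[i]'hi')[k']'hk' := by
      intro k' hk' hlt
      calc J.flatten[blockSum β i + k']'hlt
          = (J.flatten.drop (blockSum β i))[k']'(by rw [List.length_drop]; omega) :=
            List.getElem_drop.symm
        _ = ((J[i]'hi') ++ (J.drop (i + 1)).flatten)[k']'(by
              rw [List.length_append]; omega) :=
            getElem_ext (by rw [hSi]; exact hdrop) rfl
        _ = (J[i]'hi')[k']'hk' := List.getElem_append_left hk'
    -- e of τ x is the head
    have hfi : fl[i]'hi ∈ F := hflF _ (List.getElem_mem hi)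
    have hall : ∀ z ∈ (J[i]'hi'), e z = some (fl[i]'hi) := by
      rw [hJget i hi']
      exact hblockmem _ hfi
    have hτx : τ x = (J[i]'hi')[k]'hkβ := by
      have e1 : τ x = J.flatten[(x:ℕ)]'hxflat := List.getElem_append_left hxflat
      have e2 : J.flatten[(x:ℕ)]'hxflat = J.flatten[blockSum β i + k]'(by omega) :=
        getElem_ext rfl hxeq
      exact e1.trans (e2.trans (hgetflat k hkβ (by omega)))
    have heτx : e (τ x) = some (fl[i]'hi) := by
      rw [hτx]
      exact hall _ (List.getElem_mem hkβ)
    -- head position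
    have hSin : blockSum β i < n := lt_of_le_of_lt hx1 x.2
    set y : Fin n := ⟨blockSum β i, hSin⟩ with hy
    have h0 : (0:ℕ) < (J[i]'hi').length := by rw [← hβi]; omega
    have hSiflat : blockSum β i < J.flatten.length := by omega
    have e4 : (J[i]'hi')[0]'h0 = fl[i]'hi :=
      (getElem_ext (hJget i hi') rfl (hj := Nat.succ_pos _)).trans (List.getElem_cons_zero _ _ _)
    have hτy : τ y = fl[i]'hi := by
      have e1 : τ y = J.flatten[blockSum β i]'hSiflat :=
        List.getElem_append_left hSiflat
      have e2 : J.flatten[blockSum β i]'hSiflat =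
          J.flatten[blockSum β i + 0]'(by omega) := getElem_ext rfl (by omega)
      exact e1.trans (e2.trans ((hgetflat 0 h0 (by omega)).trans e4))
    refine ⟨y, rfl, ?_⟩
    rw [pconj]
    have hinv : (φ.symm)⁻¹ x = τ x := by
      rw [Equiv.Perm.inv_def, Equiv.symm_symm]
      rfl
    rw [hinv, heτx]
    simp only [Option.map_some]
    congr 1
    have : φ y = fl[i]'hi := hτy
    rw [← this, Equiv.symm_apply_apply]
  · -- tail
    intro x hx
    have hflatlen : J.flatten.length = blockSum β r := by
      rw [hbs r le_rfl, List.take_of_length_le (by simp [hJlen]), List.length_flatten]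
    have hxge : J.flatten.length ≤ (x : ℕ) := by omega
    have hτx : τ x ∈ UL := by
      have e1 : τ x = UL[(x:ℕ) - J.flatten.length]'(by
          have := x.2; omega) := List.getElem_append_right hxge
      rw [e1]
      exact List.getElem_mem _
    have hxU : τ x ∈ U := by rwa [hUL, Finset.mem_toList] at hτx
    have : e (τ x) = none := by
      simp only [hU, Finset.mem_filter] at hxU
      exact hxU.2
    rw [pconj]
    have hinv : (φ.symm)⁻¹ x = τ x := by
      rw [Equiv.Perm.inv_def, Equiv.symm_symm]
      rfl
    rw [hinv, this]
    rfl
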